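/- Let f(x,θ) = (1/(√(2π)θ)) e^{−x²/(2θ²)} and g(x,θ) = (1/(√(2π)θ)) (3/4 + x²/(4θ²)) e^{−x²/(2θ²)}. Then g(·,θ) is a probability density, N(θ) := ∫_ℝ (∂_θ g(x,θ))²/f(x,θ) dx = 6/θ², λ(θ) := ∫_ℝ (x⁴/3) g(x,θ) dx = 2θ⁴, and (λ′(θ))²/N(θ) = 32θ⁸/3 = Var_{f_θ}(X⁴/3). -/

import Mathlib

open MeasureTheory Real


lemma ipow {b : ℝ} (hb : 0 < b) (n : ℕ) :
    Integrable (fun x : ℝ => x ^ n * Real.exp (-b * x ^ 2)) := by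
  have h := integrable_rpow_mul_exp_neg_mul_sq hb (s := (n : ℝ))
    (neg_one_lt_zero.trans_le (Nat.cast_nonneg n))
  simp_rw [Real.rpow_natCast] at h
  exact h

lemma step {b : ℝ} (hb : 0 < b) (k : ℕ) :
    ∫ x : ℝ, x ^ (k + 2) * Real.exp (-b * x ^ 2)
      = ((k + 1 : ℝ) / (2 * b)) * ∫ x : ℝ, x ^ k * Real.exp (-b * x ^ 2) := by
  have hF : ∀ x : ℝ, HasDerivAt (fun x : ℝ => -(x ^ (k + 1) * Real.exp (-b * x ^ 2) / (2 * b)))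
      (x ^ (k + 2) * Real.exp (-b * x ^ 2)
        - ((k + 1 : ℝ) / (2 * b)) * (x ^ k * Real.exp (-b * x ^ 2))) x := by
    intro x
    have h1 : HasDerivAt (fun x : ℝ => x ^ (k + 1)) ((k + 1 : ℝ) * x ^ k) x := by
      simpa using hasDerivAt_pow (k + 1) x
    have h2 : HasDerivAt (fun x : ℝ => Real.exp (-b * x ^ 2))
        (Real.exp (-b * x ^ 2) * (-b * (2 * x))) x := by
      have : HasDerivAt (fun x : ℝ => -b * x ^ 2) (-b * (2 * x)) x := by
        simpa using (hasDerivAt_pow 2 x).const_mul (-b)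
      exact this.exp
    have h3 := ((h1.mul h2).div_const (2 * b)).neg
    have h2b : (2 * b) ≠ 0 := by positivity
    convert h3 using 1
    · rfl
    · rfl
    · rfl
    rw [← neg_div, eq_div_iff h2b]
    field_simp
    ring
  have hint : Integrable (fun x : ℝ => x ^ (k + 2) * Real.exp (-b * x ^ 2)
      - ((k + 1 : ℝ) / (2 * b)) * (x ^ k * Real.exp (-b * x ^ 2))) :=
    (ipow hb (k + 2)).sub ((ipow hb k).const_mul _)
  have hFint : Integrable (fun x : ℝ => -(x ^ (k + 1) * Real.exp (-b * x ^ 2) / (2 * b))) :=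
    (((ipow hb (k + 1)).div_const (2 * b)).neg)
  have h0 := integral_eq_zero_of_hasDerivAt_of_integrable hF hint hFint
  rw [integral_sub (ipow hb (k + 2)) ((ipow hb k).const_mul _), integral_const_mul] at h0
  linarith

lemma gderiv (x θ : ℝ) (hθ : 0 < θ) :
    HasDerivAt (fun t : ℝ => 1 / (Real.sqrt (2 * Real.pi) * t) * (3 / 4 + x ^ 2 / (4 * t ^ 2)) *
        Real.exp (-x ^ 2 / (2 * t ^ 2)))
      ((x ^ 4 / (4 * θ ^ 6) - 3 / (4 * θ ^ 2)) * ((Real.sqrt (2 * Real.pi))⁻¹ *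
        Real.exp (-x ^ 2 / (2 * θ ^ 2)))) θ := by
  have hs : (0:ℝ) < Real.sqrt (2 * Real.pi) := Real.sqrt_pos.2 (by positivity)
  have hinv : HasDerivAt (fun t : ℝ => t⁻¹) (-(θ ^ 2)⁻¹) θ := hasDerivAt_inv hθ.ne'
  have hpoly : HasDerivAt
      (fun t : ℝ => (Real.sqrt (2 * Real.pi))⁻¹ * ((3 / 4) * t⁻¹ + (x ^ 2 / 4) * (t⁻¹) ^ 3))
      ((Real.sqrt (2 * Real.pi))⁻¹ * ((3 / 4) * (-(θ ^ 2)⁻¹)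
        + (x ^ 2 / 4) * (3 * (θ⁻¹) ^ 2 * (-(θ ^ 2)⁻¹)))) θ := by
    have h3 : HasDerivAt (fun t : ℝ => (t⁻¹) ^ 3) (3 * (θ⁻¹) ^ 2 * (-(θ ^ 2)⁻¹)) θ := by
      simpa [Pi.pow_def] using hinv.pow 3
    exact ((hinv.const_mul (3/4:ℝ)).add (h3.const_mul (x ^ 2 / 4))).const_mul _
  have hexp : HasDerivAt (fun t : ℝ => Real.exp ((-(x ^ 2) / 2) * (t⁻¹) ^ 2))
      (Real.exp ((-(x ^ 2) / 2) * (θ⁻¹) ^ 2) * ((-(x ^ 2) / 2) * (2 * (θ⁻¹) ^ 1 * (-(θ ^ 2)⁻¹)))) θ := by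
    have h2 : HasDerivAt (fun t : ℝ => (-(x ^ 2) / 2) * (t⁻¹) ^ 2)
        ((-(x ^ 2) / 2) * (2 * (θ⁻¹) ^ 1 * (-(θ ^ 2)⁻¹))) θ := (hinv.pow 2).const_mul _
    exact h2.exp
  have HF := hpoly.mul hexp
  have heq : (fun t : ℝ => 1 / (Real.sqrt (2 * Real.pi) * t) * (3 / 4 + x ^ 2 / (4 * t ^ 2)) *
        Real.exp (-x ^ 2 / (2 * t ^ 2)))
      =ᶠ[nhds θ] (fun t : ℝ => (Real.sqrt (2 * Real.pi))⁻¹ *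
        ((3 / 4) * t⁻¹ + (x ^ 2 / 4) * (t⁻¹) ^ 3) * Real.exp ((-(x ^ 2) / 2) * (t⁻¹) ^ 2)) := by
    filter_upwards [eventually_ne_nhds hθ.ne'] with t ht
    have e1 : -x ^ 2 / (2 * t ^ 2) = (-(x ^ 2) / 2) * (t⁻¹) ^ 2 := by field_simp
    rw [e1]
    congr 1
    field_simp
  have H := HF.congr_of_eventuallyEq heq
  convert H using 1
  · rfl
  · rfl
  have e2 : -x ^ 2 / (2 * θ ^ 2) = (-(x ^ 2) / 2) * (θ⁻¹) ^ 2 := by field_simp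
  rw [e2]
  field_simp
  ring

lemma ipow' {θ : ℝ} (hθ : 0 < θ) (n : ℕ) :
    Integrable (fun x : ℝ => x ^ n * Real.exp (-(1/(2*θ^2)) * x ^ 2)) := by
  have hb : (0:ℝ) < 1/(2*θ^2) := by positivity
  have h := integrable_rpow_mul_exp_neg_mul_sq hb (s := (n : ℝ))
    (neg_one_lt_zero.trans_le (Nat.cast_nonneg n))
  simp_rw [Real.rpow_natCast] at h
  exact h

lemma I0' {θ : ℝ} (hθ : 0 < θ) :
    ∫ x : ℝ, Real.exp (-(1/(2*θ^2)) * x ^ 2) = Real.sqrt (2*Real.pi) * θ := by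
  rw [integral_gaussian, show Real.pi / (1/(2*θ^2)) = (2*Real.pi)*θ^2 by field_simp,
    Real.sqrt_mul (by positivity), Real.sqrt_sq hθ.le]

lemma key' {θ : ℝ} (hθ : 0 < θ) (k : ℕ) :
    ∫ x : ℝ, x ^ (k+2) * Real.exp (-(1/(2*θ^2)) * x ^ 2)
      = ((k+1:ℝ)*θ^2) * ∫ x : ℝ, x ^ k * Real.exp (-(1/(2*θ^2)) * x ^ 2) := by
  have hb : (0:ℝ) < 1/(2*θ^2) := by positivity
  rw [step hb k]
  congr 1
  field_simp

lemma J2' {θ : ℝ} (hθ : 0 < θ) :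
    ∫ x : ℝ, x ^ 2 * Real.exp (-(1/(2*θ^2)) * x ^ 2) = θ^2 * (Real.sqrt (2*Real.pi) * θ) := by
  have h := key' hθ 0
  simp only [zero_add, Nat.cast_zero, pow_zero, one_mul] at h
  rw [h, I0' hθ]

lemma J4' {θ : ℝ} (hθ : 0 < θ) :
    ∫ x : ℝ, x ^ 4 * Real.exp (-(1/(2*θ^2)) * x ^ 2) = 3*θ^4 * (Real.sqrt (2*Real.pi) * θ) := by
  have h := key' hθ 2
  simp only [Nat.reduceAdd, Nat.cast_ofNat] at h
  rw [h, J2' hθ]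
  ring

lemma J6' {θ : ℝ} (hθ : 0 < θ) :
    ∫ x : ℝ, x ^ 6 * Real.exp (-(1/(2*θ^2)) * x ^ 2) = 15*θ^6 * (Real.sqrt (2*Real.pi) * θ) := by
  have h := key' hθ 4
  simp only [Nat.reduceAdd, Nat.cast_ofNat] at h
  rw [h, J4' hθ]
  ring

lemma J8' {θ : ℝ} (hθ : 0 < θ) :
    ∫ x : ℝ, x ^ 8 * Real.exp (-(1/(2*θ^2)) * x ^ 2) = 105*θ^8 * (Real.sqrt (2*Real.pi) * θ) := by
  have h := key' hθ 6
  simp only [Nat.reduceAdd, Nat.cast_ofNat] at h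
  rw [h, J6' hθ]
  ring


/-- Naudts's generalized bound attained for the normal scale family: with
`f(x,θ)` the `N(0,θ²)` density and escort
`g(x,θ) = (3/4 + x²/(4θ²)) e^(−x²/(2θ²))/(√(2π)θ)`, `g` is a density,
`N(θ) = 6/θ²`, `λ(θ) = 2θ⁴`, and `(λ′(θ))²/N(θ) = 32θ⁸/3 = Var_{f_θ}(X⁴/3)`. -/
theorem normal_naudts_bound_attained
    (θ : ℝ) (hθ : 0 < θ)
    (f g : ℝ → ℝ → ℝ)
    (hf : ∀ x t, f x t = 1 / (Real.sqrt (2 * Real.pi) * t) * Real.exp (-x ^ 2 / (2 * t ^ 2)))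
    (hg : ∀ x t, g x t = 1 / (Real.sqrt (2 * Real.pi) * t) * (3 / 4 + x ^ 2 / (4 * t ^ 2)) *
      Real.exp (-x ^ 2 / (2 * t ^ 2))) :
    (∫ x : ℝ, g x θ) = 1 ∧
    (∫ x : ℝ, (deriv (fun t => g x t) θ) ^ 2 / f x θ) = 6 / θ ^ 2 ∧
    (∫ x : ℝ, (x ^ 4 / 3) * g x θ) = 2 * θ ^ 4 ∧
    (deriv (fun t : ℝ => 2 * t ^ 4) θ) ^ 2 / (6 / θ ^ 2) = 32 * θ ^ 8 / 3 ∧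
    (32 : ℝ) * θ ^ 8 / 3 = ∫ x : ℝ, (x ^ 4 / 3 - θ ^ 4) ^ 2 * f x θ := by
  have hs : (0:ℝ) < Real.sqrt (2 * Real.pi) := Real.sqrt_pos.2 (by positivity)
  have hE : ∀ x : ℝ, Real.exp (-x ^ 2 / (2 * θ ^ 2)) = Real.exp (-(1/(2*θ^2)) * x ^ 2) := by
    intro x; congr 1; ring
  have iexp : Integrable (fun x : ℝ => Real.exp (-(1/(2*θ^2)) * x ^ 2)) := by
    simpa using ipow' hθ 0
  -- Part 1
  have p1 : (∫ x : ℝ, g x θ) = 1 := by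
    have hgfun : (fun x : ℝ => g x θ) = fun x : ℝ =>
        (1/(Real.sqrt (2*Real.pi)*θ)*(3/4)) * Real.exp (-(1/(2*θ^2))*x^2)
        + (1/(Real.sqrt (2*Real.pi)*θ)/(4*θ^2)) * (x^2 * Real.exp (-(1/(2*θ^2))*x^2)) := by
      funext x; rw [hg, hE]; ring
    rw [hgfun, integral_add (iexp.const_mul _) ((ipow' hθ 2).const_mul _),
      integral_const_mul, integral_const_mul, I0' hθ, J2' hθ]
    field_simp
    ring
  -- derivative of g in t
  have hDx : ∀ x : ℝ, deriv (fun t => g x t) θ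
      = (x ^ 4 / (4 * θ ^ 6) - 3 / (4 * θ ^ 2)) * ((Real.sqrt (2 * Real.pi))⁻¹ *
        Real.exp (-x ^ 2 / (2 * θ ^ 2))) := by
    intro x
    have hfun : (fun t : ℝ => g x t) = fun t : ℝ =>
        1 / (Real.sqrt (2 * Real.pi) * t) * (3 / 4 + x ^ 2 / (4 * t ^ 2)) *
          Real.exp (-x ^ 2 / (2 * t ^ 2)) := funext fun t => hg x t
    rw [hfun]
    exact (gderiv x θ hθ).deriv
  -- Part 2
  have p2 : (∫ x : ℝ, (deriv (fun t => g x t) θ) ^ 2 / f x θ) = 6 / θ ^ 2 := by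
    have h2fun : (fun x : ℝ => (deriv (fun t => g x t) θ) ^ 2 / f x θ)
        = fun x : ℝ => ((θ/(16*θ^12*Real.sqrt (2*Real.pi))) * (x^8*Real.exp (-(1/(2*θ^2))*x^2))
            - (6*θ/(16*θ^8*Real.sqrt (2*Real.pi))) * (x^4*Real.exp (-(1/(2*θ^2))*x^2)))
          + (9*θ/(16*θ^4*Real.sqrt (2*Real.pi))) * Real.exp (-(1/(2*θ^2))*x^2) := by
      funext x
      rw [hDx x, hf, hE]
      have hEx : Real.exp (-(1/(2*θ^2))*x^2) ≠ 0 := (Real.exp_pos _).ne'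
      field_simp
      ring
    have i8 : Integrable (fun x : ℝ =>
        (θ/(16*θ^12*Real.sqrt (2*Real.pi))) * (x^8*Real.exp (-(1/(2*θ^2))*x^2))) :=
      (ipow' hθ 8).const_mul _
    have i4 : Integrable (fun x : ℝ =>
        (6*θ/(16*θ^8*Real.sqrt (2*Real.pi))) * (x^4*Real.exp (-(1/(2*θ^2))*x^2))) :=
      (ipow' hθ 4).const_mul _
    have i0 : Integrable (fun x : ℝ =>
        (9*θ/(16*θ^4*Real.sqrt (2*Real.pi))) * Real.exp (-(1/(2*θ^2))*x^2)) :=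
      iexp.const_mul _
    have isub : Integrable (fun x : ℝ =>
        (θ/(16*θ^12*Real.sqrt (2*Real.pi))) * (x^8*Real.exp (-(1/(2*θ^2))*x^2))
          - (6*θ/(16*θ^8*Real.sqrt (2*Real.pi))) * (x^4*Real.exp (-(1/(2*θ^2))*x^2))) := i8.sub i4
    rw [h2fun, integral_add isub i0, integral_sub i8 i4,
      integral_const_mul, integral_const_mul, integral_const_mul, J8' hθ, J4' hθ, I0' hθ]
    field_simp
    ring
  -- Part 3
  have p3 : (∫ x : ℝ, (x ^ 4 / 3) * g x θ) = 2 * θ ^ 4 := by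
    have h3fun : (fun x : ℝ => (x ^ 4 / 3) * g x θ)
        = fun x : ℝ => (1/(Real.sqrt (2*Real.pi)*θ)/4) * (x^4*Real.exp (-(1/(2*θ^2))*x^2))
          + (1/(Real.sqrt (2*Real.pi)*θ)/(12*θ^2)) * (x^6*Real.exp (-(1/(2*θ^2))*x^2)) := by
      funext x; rw [hg, hE]; ring
    rw [h3fun, integral_add ((ipow' hθ 4).const_mul _) ((ipow' hθ 6).const_mul _),
      integral_const_mul, integral_const_mul, J4' hθ, J6' hθ]
    field_simp
    ring
  -- Part 4
  have p4 : (deriv (fun t : ℝ => 2 * t ^ 4) θ) ^ 2 / (6 / θ ^ 2) = 32 * θ ^ 8 / 3 := by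
    have hd : deriv (fun t : ℝ => 2 * t ^ 4) θ = 8 * θ ^ 3 := by
      rw [((hasDerivAt_pow 4 θ).const_mul (2:ℝ)).deriv]
      norm_num
      ring
    rw [hd]
    field_simp
    ring
  -- Part 5
  have p5 : (32 : ℝ) * θ ^ 8 / 3 = ∫ x : ℝ, (x ^ 4 / 3 - θ ^ 4) ^ 2 * f x θ := by
    have h5fun : (fun x : ℝ => (x ^ 4 / 3 - θ ^ 4) ^ 2 * f x θ)
        = fun x : ℝ => ((1/(9*Real.sqrt (2*Real.pi)*θ)) * (x^8*Real.exp (-(1/(2*θ^2))*x^2))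
            - (2*θ^4/(3*Real.sqrt (2*Real.pi)*θ)) * (x^4*Real.exp (-(1/(2*θ^2))*x^2)))
          + (θ^8/(Real.sqrt (2*Real.pi)*θ)) * Real.exp (-(1/(2*θ^2))*x^2) := by
      funext x; rw [hf, hE]
      field_simp
      ring
    have i8 : Integrable (fun x : ℝ =>
        (1/(9*Real.sqrt (2*Real.pi)*θ)) * (x^8*Real.exp (-(1/(2*θ^2))*x^2))) :=
      (ipow' hθ 8).const_mul _
    have i4 : Integrable (fun x : ℝ =>
        (2*θ^4/(3*Real.sqrt (2*Real.pi)*θ)) * (x^4*Real.exp (-(1/(2*θ^2))*x^2))) :=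
      (ipow' hθ 4).const_mul _
    have i0 : Integrable (fun x : ℝ =>
        (θ^8/(Real.sqrt (2*Real.pi)*θ)) * Real.exp (-(1/(2*θ^2))*x^2)) :=
      iexp.const_mul _
    have isub : Integrable (fun x : ℝ =>
        (1/(9*Real.sqrt (2*Real.pi)*θ)) * (x^8*Real.exp (-(1/(2*θ^2))*x^2))
          - (2*θ^4/(3*Real.sqrt (2*Real.pi)*θ)) * (x^4*Real.exp (-(1/(2*θ^2))*x^2))) := i8.sub i4
    rw [h5fun, integral_add isub i0, integral_sub i8 i4,
      integral_const_mul, integral_const_mul, integral_const_mul, J8' hθ, J4' hθ, I0' hθ]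
    field_simp
    ring
  exact ⟨p1, p2, p3, p4, p5⟩
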